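/- (Stability of CPLD) Consider a constrained optimization problem with C¹ inequality constraints G_i(w) ≤ 0 (i ∈ I) and equality constraints H_j(w) = 0 (j ∈ J), with finite index sets. If the constant positive linear dependence condition (CPLD) holds at a feasible point w̄, then there exists a neighborhood Ū of w̄ such that CPLD holds at every feasible point in Ū. -/

import Mathlib

open scoped BigOperators

/-- Positive-linear dependence of the gradients of the constraints indexed by
`I₀`, `J₀` at the point `w`. -/
def PosLinDepAt {N l r : ℕ}
    (G : Fin l → (Fin N → ℝ) → ℝ) (H : Fin r → (Fin N → ℝ) → ℝ)
    (I0 : Finset (Fin l)) (J0 : Finset (Fin r)) (w : Fin N → ℝ) : Prop :=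
  ∃ (α : Fin l → ℝ) (β : Fin r → ℝ),
    (∀ i, 0 ≤ α i) ∧ (∀ i ∉ I0, α i = 0) ∧ (∀ j ∉ J0, β j = 0) ∧
    (α ≠ 0 ∨ β ≠ 0) ∧
    (∑ i, α i • fderiv ℝ (G i) w) + (∑ j, β j • fderiv ℝ (H j) w) = 0

/-- Linear dependence of the gradients of the constraints indexed by
`I₀`, `J₀` at the point `w`. -/
def LinDepAt {N l r : ℕ}
    (G : Fin l → (Fin N → ℝ) → ℝ) (H : Fin r → (Fin N → ℝ) → ℝ)
    (I0 : Finset (Fin l)) (J0 : Finset (Fin r)) (w : Fin N → ℝ) : Prop :=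
  ∃ (α : Fin l → ℝ) (β : Fin r → ℝ),
    (∀ i ∉ I0, α i = 0) ∧ (∀ j ∉ J0, β j = 0) ∧
    (α ≠ 0 ∨ β ≠ 0) ∧
    (∑ i, α i • fderiv ℝ (G i) w) + (∑ j, β j • fderiv ℝ (H j) w) = 0

/-- The constant positive linear dependence condition (CPLD) at a feasible
point `w` of the system `G ≤ 0`, `H = 0`. -/
def CPLDAt {N l r : ℕ}
    (G : Fin l → (Fin N → ℝ) → ℝ) (H : Fin r → (Fin N → ℝ) → ℝ)
    (w : Fin N → ℝ) : Prop :=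
  ∀ (I0 : Finset (Fin l)) (J0 : Finset (Fin r)),
    (∀ i ∈ I0, G i w = 0) →
    PosLinDepAt G H I0 J0 w →
    ∃ U ∈ nhds w, ∀ w' ∈ U, LinDepAt G H I0 J0 w'

private lemma not_posLinDep_nhds {N l r : ℕ}
    (G : Fin l → (Fin N → ℝ) → ℝ) (H : Fin r → (Fin N → ℝ) → ℝ)
    (hG : ∀ i, ContDiff ℝ 1 (G i)) (hH : ∀ j, ContDiff ℝ 1 (H j))
    (I0 : Finset (Fin l)) (J0 : Finset (Fin r)) (wbar : Fin N → ℝ)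
    (hnot : ¬ PosLinDepAt G H I0 J0 wbar) :
    ∃ U, IsOpen U ∧ wbar ∈ U ∧ ∀ w' ∈ U, ¬ PosLinDepAt G H I0 J0 w' := by
  classical
  set E := (Fin l → ℝ) × (Fin r → ℝ)
  set Φ : E × (Fin N → ℝ) → ((Fin N → ℝ) →L[ℝ] ℝ) :=
    fun q => (∑ i, q.1.1 i • fderiv ℝ (G i) q.2) + ∑ j, q.1.2 j • fderiv ℝ (H j) q.2
    with hΦdef
  have hΦ : Continuous Φ := by
    refine Continuous.add ?_ ?_
    · refine continuous_finset_sum _ fun i _ => ?_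
      exact ((continuous_apply i).comp (continuous_fst.comp continuous_fst)).smul
        (((hG i).continuous_fderiv one_ne_zero).comp continuous_snd)
    · refine continuous_finset_sum _ fun j _ => ?_
      exact ((continuous_apply j).comp (continuous_snd.comp continuous_fst)).smul
        (((hH j).continuous_fderiv one_ne_zero).comp continuous_snd)
  set S : Set E := {p | (∀ i, 0 ≤ p.1 i) ∧ (∀ i ∉ I0, p.1 i = 0) ∧
      (∀ j ∉ J0, p.2 j = 0) ∧ ‖p‖ = 1} with hSdef
  have hSclosed : IsClosed S := by
    have : S = (⋂ i, {p : E | 0 ≤ p.1 i}) ∩ ((⋂ i, {p : E | i ∈ I0 ∨ p.1 i = 0}) ∩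
        ((⋂ j, {p : E | j ∈ J0 ∨ p.2 j = 0}) ∩ {p : E | ‖p‖ = 1})) := by
      ext p
      simp only [hSdef, Set.mem_setOf_eq, Set.mem_inter_iff, Set.mem_iInter]
      constructor
      · rintro ⟨h1, h2, h3, h4⟩
        refine ⟨h1, fun i => ?_, fun j => ?_, h4⟩
        · by_cases hi : i ∈ I0
          · exact Or.inl hi
          · exact Or.inr (h2 i hi)
        · by_cases hj : j ∈ J0
          · exact Or.inl hj
          · exact Or.inr (h3 j hj)
      · rintro ⟨h1, h2, h3, h4⟩
        exact ⟨h1, fun i hi => (h2 i).resolve_left hi, fun j hj => (h3 j).resolve_left hj, h4⟩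
    rw [this]
    refine IsClosed.inter (isClosed_iInter fun i =>
        isClosed_le continuous_const ((continuous_apply i).comp continuous_fst))
      (IsClosed.inter (isClosed_iInter fun i => ?_)
        (IsClosed.inter (isClosed_iInter fun j => ?_)
          (isClosed_eq continuous_norm continuous_const)))
    · by_cases hi : i ∈ I0
      · simp [hi]
      · have : {p : E | i ∈ I0 ∨ p.1 i = 0} = {p : E | p.1 i = 0} := by
          ext p; simp [hi]
        rw [this]
        exact isClosed_eq ((continuous_apply i).comp continuous_fst) continuous_const
    · by_cases hj : j ∈ J0
      · simp [hj]
      · have : {p : E | j ∈ J0 ∨ p.2 j = 0} = {p : E | p.2 j = 0} := by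
          ext p; simp [hj]
        rw [this]
        exact isClosed_eq ((continuous_apply j).comp continuous_snd) continuous_const
  have hScompact : IsCompact S := by
    refine Metric.isCompact_of_isClosed_isBounded hSclosed ?_
    refine (Metric.isBounded_sphere (x := (0 : E)) (r := 1)).subset fun p hp => ?_
    simpa [mem_sphere_zero_iff_norm] using hp.2.2.2
  -- the bad set is closed
  have hopenn : IsOpen {q : E × (Fin N → ℝ) | Φ q ≠ 0} := by
    have : IsClosed (Φ ⁻¹' {0}) := isClosed_singleton.preimage hΦ
    simpa [Set.preimage, Set.compl_setOf] using this.isOpen_compl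
  have hsub : S ×ˢ ({wbar} : Set (Fin N → ℝ)) ⊆ {q | Φ q ≠ 0} := by
    rintro ⟨p, w⟩ ⟨hpS, hw⟩
    simp only [Set.mem_singleton_iff] at hw
    subst hw
    intro h0
    apply hnot
    refine ⟨p.1, p.2, hpS.1, hpS.2.1, hpS.2.2.1, ?_, h0⟩
    by_contra hc
    push_neg at hc
    have hp0 : p = 0 := Prod.ext hc.1 hc.2
    have := hpS.2.2.2
    rw [hp0] at this
    simp at this
  obtain ⟨u, v, hu, hv, hSu, hwv, huv⟩ :=
    generalized_tube_lemma hScompact isCompact_singleton hopenn hsub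
  refine ⟨v, hv, hwv rfl, fun w' hw' hpos => ?_⟩
  obtain ⟨α, β, hα0, hαs, hβs, hne, hsum⟩ := hpos
  have hab : ((α, β) : E) ≠ 0 := by
    intro h
    rcases hne with h1 | h1 <;> [exact h1 (congrArg Prod.fst h); exact h1 (congrArg Prod.snd h)]
  set c : ℝ := ‖((α, β) : E)‖ with hc
  have hcpos : 0 < c := norm_pos_iff.mpr hab
  set p : E := c⁻¹ • ((α, β) : E) with hp
  have hpS : p ∈ S := by
    refine ⟨fun i => ?_, fun i hi => ?_, fun j hj => ?_, ?_⟩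
    · exact mul_nonneg (inv_nonneg.mpr hcpos.le) (hα0 i)
    · simp [hp, hαs i hi]
    · simp [hp, hβs j hj]
    · rw [hp, norm_smul, norm_inv, Real.norm_eq_abs, abs_of_pos hcpos]
      field_simp
      exact hc.symm
  have hmem : (p, w') ∈ u ×ˢ v := ⟨hSu hpS, hw'⟩
  have hne0 := huv hmem
  apply hne0
  show Φ (p, w') = 0
  have : Φ (p, w') = c⁻¹ • Φ ((α, β), w') := by
    simp only [hΦdef, hp]
    rw [smul_add, Finset.smul_sum, Finset.smul_sum]
    congr 1 <;> refine Finset.sum_congr rfl fun i _ => ?_ <;>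
      simp [Prod.smul_fst, Prod.smul_snd, smul_smul]
  rw [this]
  have : Φ ((α, β), w') = 0 := hsum
  rw [this, smul_zero]

/-- Stability of CPLD: if CPLD holds at a feasible point `w̄` of a constraint
system with C¹ data, then it holds at every feasible point in a neighborhood
of `w̄`. -/
theorem cpld_stable
    {N l r : ℕ}
    (G : Fin l → (Fin N → ℝ) → ℝ) (H : Fin r → (Fin N → ℝ) → ℝ)
    (hG : ∀ i, ContDiff ℝ 1 (G i)) (hH : ∀ j, ContDiff ℝ 1 (H j))
    (wbar : Fin N → ℝ)
    (hfeas : (∀ i, G i wbar ≤ 0) ∧ (∀ j, H j wbar = 0))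
    (hcpld : CPLDAt G H wbar) :
    ∃ U ∈ nhds wbar, ∀ w ∈ U,
      ((∀ i, G i w ≤ 0) ∧ (∀ j, H j w = 0)) → CPLDAt G H w := by
  classical
  have key : ∀ p : Finset (Fin l) × Finset (Fin r), ∃ U, IsOpen U ∧ wbar ∈ U ∧
      ((∀ w' ∈ U, LinDepAt G H p.1 p.2 w') ∨
       (∀ w' ∈ U, ¬((∀ i ∈ p.1, G i w' = 0) ∧ PosLinDepAt G H p.1 p.2 w'))) := by
    rintro ⟨I0, J0⟩
    by_cases hact : ∀ i ∈ I0, G i wbar = 0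
    · by_cases hpos : PosLinDepAt G H I0 J0 wbar
      · obtain ⟨U, hU, hUlin⟩ := hcpld I0 J0 hact hpos
        exact ⟨interior U, isOpen_interior, mem_interior_iff_mem_nhds.mpr hU,
          Or.inl fun w' hw' => hUlin w' (interior_subset hw')⟩
      · obtain ⟨U, hUo, hUm, hUn⟩ := not_posLinDep_nhds G H hG hH I0 J0 wbar hpos
        exact ⟨U, hUo, hUm, Or.inr fun w' hw' h => hUn w' hw' h.2⟩
    · push_neg at hact
      obtain ⟨i, hi, hne⟩ := hact
      have hlt : G i wbar < 0 := lt_of_le_of_ne (hfeas.1 i) hne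
      refine ⟨(G i) ⁻¹' Set.Iio 0, isOpen_Iio.preimage (hG i).continuous, hlt,
        Or.inr fun w' hw' h => ?_⟩
      exact absurd (h.1 i hi) (ne_of_lt hw')
  choose U hUo hUm hUd using key
  refine ⟨⋂ p, U p, ?_, fun w hw _ => ?_⟩
  · exact (isOpen_iInter_of_finite hUo).mem_nhds (Set.mem_iInter.mpr hUm)
  · intro I0 J0 hact hpos
    have hwp : w ∈ U (I0, J0) := Set.mem_iInter.mp hw (I0, J0)
    rcases hUd (I0, J0) with h | h
    · exact ⟨U (I0, J0), (hUo _).mem_nhds hwp, h⟩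
    · exact absurd ⟨hact, hpos⟩ (h w hwp)
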